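/- Let (h₁,v₁) and (h₂,v₂) be pairs of permutations on disjoint finite sets A and B, with h₁ = (a₁,a₂,...,a_N) a single N-cycle on A, h₂ = (b₁,b₂,...,b_M) a single M-cycle on B, v₁ a single cycle on A with v₁⁻¹(a₁) = a₂, and v₂ a single cycle on B with v₂⁻¹(b₁) = b₂. Define h = (a₁,b₁)·h₁·h₂ and v = v₁·v₂·(a₁,b₁), where (a₁,b₁) denotes the transposition. Then h is a single (N+M)-cycle on A ∪ B, v is a single (N+M)-cycle on A ∪ B, and the commutator [h,v] equals the conjugate of [h₁,v₁]·[h₂,v₂] by the transposition (a₁,b₁). -/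

import Mathlib

open Equiv Equiv.Perm


lemma cyl_join {α : Type*} [Fintype α] [DecidableEq α] (f g : Equiv.Perm α)
    (hf : f.IsCycle) (hg : g.IsCycle) (hd : Disjoint f.support g.support)
    {a b : α} (ha : a ∈ f.support) (hb : b ∈ g.support) :
    (Equiv.swap a b * f * g).IsCycle ∧
      (Equiv.swap a b * f * g).support = f.support ∪ g.support := by
  set h : Equiv.Perm α := Equiv.swap a b * f * g with hh
  have haB : a ∉ g.support := Finset.disjoint_left.mp hd ha
  have hbA : b ∉ f.support := fun hc => Finset.disjoint_left.mp hd hc hb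
  have hab : a ≠ b := fun e => haB (e ▸ hb)
  have hpt : ∀ x, h x = Equiv.swap a b (f (g x)) := by
    intro x; simp [hh, Equiv.Perm.mul_apply]
  have hB : ∀ x ∈ g.support, h x = if g x = b then a else g x := by
    intro x hx
    have hgx : g x ∈ g.support := apply_mem_support.mpr hx
    have hfgx : f (g x) = g x := notMem_support.mp (fun hc => Finset.disjoint_left.mp hd hc hgx)
    rw [hpt, hfgx]
    by_cases hgb : g x = b
    · simp [hgb, Equiv.swap_apply_right]
    · have : g x ≠ a := fun e => haB (e ▸ hgx)
      simp [hgb, Equiv.swap_apply_of_ne_of_ne this hgb]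
  have hA : ∀ x ∈ f.support, h x = if f x = a then b else f x := by
    intro x hx
    have hgxx : g x = x := notMem_support.mp (fun hc => Finset.disjoint_left.mp hd hx hc)
    have hfx : f x ∈ f.support := apply_mem_support.mpr hx
    rw [hpt, hgxx]
    by_cases hfa : f x = a
    · simp [hfa, Equiv.swap_apply_left]
    · have : f x ≠ b := fun e => hbA (e ▸ hfx)
      simp [hfa, Equiv.swap_apply_of_ne_of_ne hfa this]
  have hfix : ∀ x, x ∉ f.support → x ∉ g.support → h x = x := by
    intro x hx hx'
    rw [hpt, notMem_support.mp hx', notMem_support.mp hx]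
    exact Equiv.swap_apply_of_ne_of_ne (fun e => hx (e ▸ ha)) (fun e => hx' (e ▸ hb))
  have hsupp : h.support = f.support ∪ g.support := by
    ext x
    simp only [Finset.mem_union, mem_support]
    constructor
    · intro hx
      by_contra hc
      push_neg at hc
      exact hx (hfix x (notMem_support.mpr hc.1) (notMem_support.mpr hc.2))
    · rintro (hx | hx)
      · have hx' : x ∈ f.support := mem_support.mpr hx
        rw [hA x hx']
        split
        · exact fun e => hbA (e ▸ hx')
        · exact mem_support.mp hx'
      · have hx' : x ∈ g.support := mem_support.mpr hx
        rw [hB x hx']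
        split
        · exact fun e => haB (e ▸ hx')
        · exact mem_support.mp hx'
  -- powers in `B`
  have key1 : ∀ k : ℕ, (∀ j, 0 < j → j ≤ k → (g ^ j) b ≠ b) → (h ^ k) b = (g ^ k) b := by
    intro k
    induction k with
    | zero => intro _; simp
    | succ k ih =>
      intro H
      have hk := ih (fun j hj hj' => H j hj (Nat.le_succ_of_le hj'))
      rw [pow_succ', Equiv.Perm.mul_apply, hk]
      have hmem : (g ^ k) b ∈ g.support := pow_apply_mem_support.mpr hb
      rw [hB _ hmem]
      have hne : g ((g ^ k) b) ≠ b := by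
        rw [← Equiv.Perm.mul_apply, ← pow_succ']
        exact H (k + 1) (Nat.succ_pos k) le_rfl
      rw [if_neg hne, ← Equiv.Perm.mul_apply, ← pow_succ']
  have hgb : g b ≠ b := mem_support.mp hb
  have key1' : ∀ k : ℕ, k < orderOf g → (h ^ k) b = (g ^ k) b := by
    intro k hk
    refine key1 k (fun j hj hj' hje => ?_)
    have : g ^ j = 1 := (hg.pow_eq_one_iff' hgb).mpr hje
    have := Nat.le_of_dvd hj (orderOf_dvd_of_pow_eq_one this)
    omega
  have hog : 0 < orderOf g := orderOf_pos g
  have keyBa : (h ^ orderOf g) b = a := by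
    have h1 : (h ^ (orderOf g - 1)) b = (g ^ (orderOf g - 1)) b :=
      key1' _ (by omega)
    have : orderOf g = (orderOf g - 1) + 1 := by omega
    rw [this, pow_succ', Equiv.Perm.mul_apply, h1]
    have hmem : (g ^ (orderOf g - 1)) b ∈ g.support := pow_apply_mem_support.mpr hb
    rw [hB _ hmem]
    have : g ((g ^ (orderOf g - 1)) b) = b := by
      rw [← Equiv.Perm.mul_apply, ← pow_succ', ← this, pow_orderOf_eq_one]
      rfl
    rw [if_pos this]
  have key2 : ∀ j : ℕ, (∀ i, 0 < i → i ≤ j → (f ^ i) a ≠ a) →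
      (h ^ (orderOf g + j)) b = (f ^ j) a := by
    intro j
    induction j with
    | zero => intro _; simpa using keyBa
    | succ j ih =>
      intro H
      have hj := ih (fun i hi hi' => H i hi (Nat.le_succ_of_le hi'))
      have : orderOf g + (j + 1) = (orderOf g + j) + 1 := by omega
      rw [this, pow_succ', Equiv.Perm.mul_apply, hj]
      have hmem : (f ^ j) a ∈ f.support := pow_apply_mem_support.mpr ha
      rw [hA _ hmem]
      have hne : f ((f ^ j) a) ≠ a := by
        rw [← Equiv.Perm.mul_apply, ← pow_succ']
        exact H (j + 1) (Nat.succ_pos j) le_rfl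
      rw [if_neg hne, ← Equiv.Perm.mul_apply, ← pow_succ']
  have hfa : f a ≠ a := mem_support.mp ha
  have key2' : ∀ j : ℕ, j < orderOf f → (h ^ (orderOf g + j)) b = (f ^ j) a := by
    intro j hj
    refine key2 j (fun i hi hi' hie => ?_)
    have : f ^ i = 1 := (hf.pow_eq_one_iff' hfa).mpr hie
    have := Nat.le_of_dvd hi (orderOf_dvd_of_pow_eq_one this)
    omega
  have hbsupp : b ∈ h.support := by rw [hsupp]; exact Finset.mem_union_right _ hb
  refine ⟨⟨b, mem_support.mp hbsupp, ?_⟩, hsupp⟩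
  intro y hy
  have hy' : y ∈ h.support := mem_support.mpr hy
  rw [hsupp] at hy'
  rcases Finset.mem_union.mp hy' with hyA | hyB
  · obtain ⟨i, hi⟩ := hf.exists_pow_eq hfa (mem_support.mp hyA)
    have hilt : i % orderOf f < orderOf f := Nat.mod_lt _ (orderOf_pos f)
    refine ⟨((orderOf g + i % orderOf f : ℕ) : ℤ), ?_⟩
    rw [zpow_natCast, key2' _ hilt, pow_mod_orderOf, hi]
  · obtain ⟨i, hi⟩ := hg.exists_pow_eq hgb (mem_support.mp hyB)
    have hilt : i % orderOf g < orderOf g := Nat.mod_lt _ hog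
    refine ⟨((i % orderOf g : ℕ) : ℤ), ?_⟩
    rw [zpow_natCast, key1' _ hilt, pow_mod_orderOf, hi]


lemma cyl_comm {G : Type*} [Group G] (s x₁ y₁ x₂ y₂ : G)
    (hs : s * s = 1)
    (c1 : Commute x₁ x₂) (c2 : Commute x₁ y₂) (c3 : Commute y₁ x₂) (c4 : Commute y₁ y₂)
    (c5 : s * (x₂⁻¹ * (x₁⁻¹ * (y₂⁻¹ * y₁⁻¹))) = x₂⁻¹ * (x₁⁻¹ * (y₂⁻¹ * y₁⁻¹)) * s) :
    (s * x₁ * x₂) * (y₁ * y₂ * s) * (s * x₁ * x₂)⁻¹ * (y₁ * y₂ * s)⁻¹ =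
      s * ((x₁ * y₁ * x₁⁻¹ * y₁⁻¹) * (x₂ * y₂ * x₂⁻¹ * y₂⁻¹)) * s⁻¹ := by
  have hsinv : s⁻¹ = s := inv_eq_of_mul_eq_one_right hs
  have es : ∀ t : G, s⁻¹ * (s⁻¹ * t) = t := by
    intro t; rw [hsinv, ← mul_assoc, hs, one_mul]
  have sw : ∀ u v : G, Commute u v → ∀ t : G, u * (v * t) = v * (u * t) := by
    intro u v huv t; rw [← mul_assoc, huv.eq, mul_assoc]
  simp only [mul_inv_rev, mul_assoc]
  rw [es]
  rw [show s * (x₂⁻¹ * (x₁⁻¹ * (y₂⁻¹ * y₁⁻¹))) = x₂⁻¹ * (x₁⁻¹ * (y₂⁻¹ * y₁⁻¹)) * s from c5]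
  simp only [mul_assoc]
  rw [hsinv]
  rw [sw _ _ c3.symm]
  rw [sw _ _ c1.inv_inv.symm]
  rw [sw _ _ c2.symm.inv_right]
  rw [sw _ _ c1.symm.inv_right]
  rw [sw _ _ c4.inv_inv.symm]
  rw [sw _ _ c3.inv_inv.symm]
  rw [sw _ _ c4.symm.inv_right]
  rw [sw _ _ c3.symm.inv_right]


/-- Algebraic form of the cylinder concatenation lemma (Lemma 3.1): if `(h₁,v₁)`
and `(h₂,v₂)` are pairs of single cycles with disjoint supports `A` and `B`,
normalized so that `h₁ a₁ = a₂`, `v₁⁻¹ a₁ = a₂`, `h₂ b₁ = b₂`, `v₂⁻¹ b₁ = b₂`,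
then `h = (a₁,b₁)·h₁·h₂` and `v = v₁·v₂·(a₁,b₁)` are single cycles on `A ∪ B`
and `[h,v]` is the conjugate of `[h₁,v₁]·[h₂,v₂]` by the transposition `(a₁,b₁)`. -/
theorem stmt_4 {α : Type*} [Fintype α] [DecidableEq α]
    (h₁ v₁ h₂ v₂ : Equiv.Perm α) (A B : Finset α) (a₁ a₂ b₁ b₂ : α)
    (hAB : Disjoint A B)
    (hh₁ : h₁.IsCycle) (hh₁s : h₁.support = A)
    (hv₁ : v₁.IsCycle) (hv₁s : v₁.support = A)
    (hh₂ : h₂.IsCycle) (hh₂s : h₂.support = B)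
    (hv₂ : v₂.IsCycle) (hv₂s : v₂.support = B)
    (ha₁ : a₁ ∈ A) (hb₁ : b₁ ∈ B)
    (ha12 : h₁ a₁ = a₂) (hb12 : h₂ b₁ = b₂)
    (hane : a₁ ≠ a₂) (hbne : b₁ ≠ b₂)
    (hv₁n : v₁⁻¹ a₁ = a₂) (hv₂n : v₂⁻¹ b₁ = b₂) :
    ∀ h v : Equiv.Perm α,
      h = Equiv.swap a₁ b₁ * h₁ * h₂ →
      v = v₁ * v₂ * Equiv.swap a₁ b₁ →
      h.IsCycle ∧ h.support = A ∪ B ∧ v.IsCycle ∧ v.support = A ∪ B ∧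
        h * v * h⁻¹ * v⁻¹ =
          Equiv.swap a₁ b₁ * ((h₁ * v₁ * h₁⁻¹ * v₁⁻¹) * (h₂ * v₂ * h₂⁻¹ * v₂⁻¹)) *
            (Equiv.swap a₁ b₁)⁻¹ := by
  intro h v hh hv
  subst hh; subst hv
  -- membership facts
  have ha₂ : a₂ ∈ A := by
    rw [← hh₁s, ← ha12]; exact apply_mem_support.mpr (hh₁s ▸ ha₁)
  have hb₂ : b₂ ∈ B := by
    rw [← hh₂s, ← hb12]; exact apply_mem_support.mpr (hh₂s ▸ hb₁)
  have ha₁B : a₁ ∉ B := Finset.disjoint_left.mp hAB ha₁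
  have ha₂B : a₂ ∉ B := Finset.disjoint_left.mp hAB ha₂
  have hb₁A : b₁ ∉ A := fun hc => Finset.disjoint_left.mp hAB hc hb₁
  have hb₂A : b₂ ∉ A := fun hc => Finset.disjoint_left.mp hAB hc hb₂
  -- the h part
  have hd : Disjoint h₁.support h₂.support := by rw [hh₁s, hh₂s]; exact hAB
  obtain ⟨hc, hsupp⟩ := cyl_join h₁ h₂ hh₁ hh₂ hd
    (a := a₁) (b := b₁) (by rw [hh₁s]; exact ha₁) (by rw [hh₂s]; exact hb₁)
  rw [hh₁s, hh₂s] at hsupp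
  -- the v part
  have hdv : Disjoint (v₂⁻¹).support (v₁⁻¹).support := by
    rw [support_inv, support_inv, hv₂s, hv₁s]; exact hAB.symm
  obtain ⟨vc, vsupp⟩ := cyl_join v₂⁻¹ v₁⁻¹ hv₂.inv hv₁.inv hdv
    (a := b₁) (b := a₁) (by rw [support_inv, hv₂s]; exact hb₁)
    (by rw [support_inv, hv₁s]; exact ha₁)
  have hveq : (v₁ * v₂ * Equiv.swap a₁ b₁)⁻¹ = Equiv.swap b₁ a₁ * v₂⁻¹ * v₁⁻¹ := by
    rw [mul_inv_rev, mul_inv_rev, Equiv.swap_inv, Equiv.swap_comm a₁ b₁, mul_assoc]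
  rw [← hveq] at vc vsupp
  have vcyc : (v₁ * v₂ * Equiv.swap a₁ b₁).IsCycle := by
    have := vc.inv; rwa [inv_inv] at this
  have vsupp' : (v₁ * v₂ * Equiv.swap a₁ b₁).support = A ∪ B := by
    rw [← support_inv, vsupp, support_inv, support_inv, hv₂s, hv₁s, Finset.union_comm]
  refine ⟨hc, hsupp, vcyc, vsupp', ?_⟩
  -- the commutator identity
  have dj : ∀ f g : Equiv.Perm α, f.support = A → g.support = B → Commute f g := by
    intro f g hfs hgs
    exact (Equiv.Perm.disjoint_iff_disjoint_support.mpr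
      (by rw [hfs, hgs]; exact hAB)).commute
  set W : Equiv.Perm α := h₂⁻¹ * (h₁⁻¹ * (v₂⁻¹ * v₁⁻¹)) with hW
  have hWa : W a₁ = a₁ := by
    simp only [hW, Equiv.Perm.mul_apply, hv₁n]
    rw [show v₂⁻¹ a₂ = a₂ from Equiv.Perm.notMem_support.mp
        (by rw [support_inv, hv₂s]; exact ha₂B)]
    rw [show h₁⁻¹ a₂ = a₁ by rw [← ha12]; exact Equiv.symm_apply_apply h₁ a₁]
    exact Equiv.Perm.notMem_support.mp (by rw [support_inv, hh₂s]; exact ha₁B)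
  have hWb : W b₁ = b₁ := by
    simp only [hW, Equiv.Perm.mul_apply]
    rw [show v₁⁻¹ b₁ = b₁ from Equiv.Perm.notMem_support.mp
        (by rw [support_inv, hv₁s]; exact hb₁A), hv₂n]
    rw [show h₁⁻¹ b₂ = b₂ from Equiv.Perm.notMem_support.mp
        (by rw [support_inv, hh₁s]; exact hb₂A)]
    rw [← hb12]; exact Equiv.symm_apply_apply h₂ b₁
  have hWs : W * Equiv.swap a₁ b₁ * W⁻¹ = Equiv.swap a₁ b₁ := by
    rw [← Equiv.swap_apply_apply, hWa, hWb]
  exact cyl_comm (Equiv.swap a₁ b₁) h₁ v₁ h₂ v₂ (Equiv.swap_mul_self a₁ b₁)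
    (dj h₁ h₂ hh₁s hh₂s) (dj h₁ v₂ hh₁s hv₂s) (dj v₁ h₂ hv₁s hh₂s) (dj v₁ v₂ hv₁s hv₂s)
    ((mul_inv_eq_iff_eq_mul.mp hWs).symm)
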